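/- If two real-valued functions θ₁ and θ₂ are real-analytic on a connected open set U ⊆ ℝⁿ and satisfy cos(θ₁(x)) = cos(θ₂(x)) for all x ∈ U, then either θ₁(x) = θ₂(x) + 2lπ for all x ∈ U, or θ₁(x) = -θ₂(x) + 2lπ for all x ∈ U, for some integer l. -/

import Mathlib

open Filter Set

/-- `Complex.sin` is `ℂ`-analytic. -/
lemma analyticAt_csin (z : ℂ) : AnalyticAt ℂ Complex.sin z := by
  have : Complex.sin = fun z => (Complex.exp (-z * Complex.I) -
      Complex.exp (z * Complex.I)) * Complex.I / 2 := by
    funext w; rw [Complex.sin]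
  rw [this]
  exact ((((analyticAt_cexp.comp ((analyticAt_id.neg).mul analyticAt_const)).sub
    (analyticAt_cexp.comp (analyticAt_id.mul analyticAt_const))).mul
    analyticAt_const).div analyticAt_const (by norm_num))

/-- `Real.sin` is `ℝ`-analytic. -/
lemma analyticAt_rsin (x : ℝ) : AnalyticAt ℝ Real.sin x := by
  have : Real.sin = fun x : ℝ => (Complex.sin (Complex.ofRealCLM x)).re := by
    funext y; simp [Complex.sin_ofReal_re]
  rw [this]
  exact (Complex.reCLM.analyticAt _).comp
    (((analyticAt_csin _).restrictScalars).comp (Complex.ofRealCLM.analyticAt x))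

/-- A preconnected subset of ℝ contained in a countable set is a subsingleton. -/
lemma subsingleton_of_preconnected_countable {S T : Set ℝ} (hS : IsPreconnected S)
    (hT : T.Countable) (hST : S ⊆ T) : S.Subsingleton := by
  intro a ha b hb
  by_contra hab
  rcases lt_or_gt_of_ne hab with h | h
  · have : Set.Icc a b ⊆ S := hS.ordConnected.out ha hb
    have hcnt : (Set.Icc a b).Countable := hT.mono (this.trans hST)
    have := hcnt.le_aleph0
    rw [Cardinal.mk_Icc_real h] at this
    exact absurd this (by simp [Cardinal.aleph0_lt_continuum.not_ge])
  · have : Set.Icc b a ⊆ S := hS.ordConnected.out hb ha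
    have hcnt : (Set.Icc b a).Countable := hT.mono (this.trans hST)
    have := hcnt.le_aleph0
    rw [Cardinal.mk_Icc_real h] at this
    exact absurd this (by simp [Cardinal.aleph0_lt_continuum.not_ge])

/-- If the product of two analytic functions vanishes on a preconnected open set,
one of them vanishes identically. -/
lemma analytic_mul_eq_zero {E : Type*} [NormedAddCommGroup E] [NormedSpace ℝ E]
    {f g : E → ℝ} {U : Set E} (hUopen : IsOpen U) (hUconn : IsPreconnected U)
    (hf : AnalyticOnNhd ℝ f U) (hg : AnalyticOnNhd ℝ g U)
    (hfg : ∀ x ∈ U, f x * g x = 0) :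
    (∀ x ∈ U, f x = 0) ∨ (∀ x ∈ U, g x = 0) := by
  by_cases H : ∃ z ∈ U, f =ᶠ[nhds z] 0
  · obtain ⟨z, hz, hfz⟩ := H
    exact Or.inl fun x hx => hf.eqOn_zero_of_preconnected_of_eventuallyEq_zero hUconn hz hfz hx
  · right
    push_neg at H
    intro z hz
    have hfreq : ∃ᶠ y in nhds z, f y ≠ 0 := by
      have h := H z hz
      simp only [Filter.EventuallyEq, Pi.zero_apply, Filter.not_eventually] at h
      exact h
    have hU : ∀ᶠ y in nhds z, y ∈ U := hUopen.mem_nhds hz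
    have hfreq' : ∃ᶠ y in nhds z, g y = 0 := by
      refine (hfreq.and_eventually hU).mono ?_
      rintro y ⟨hy1, hy2⟩
      rcases mul_eq_zero.mp (hfg y hy2) with h | h
      · exact absurd h hy1
      · exact h
    have hcont : ContinuousAt g z := (hg z hz).continuousAt
    have hne : (nhds z ⊓ Filter.principal {y | g y = 0}).NeBot :=
      Filter.frequently_iff_neBot.mp hfreq'
    refine tendsto_nhds_unique (f := g) (l := nhds z ⊓ Filter.principal {y | g y = 0})
      (hcont.tendsto.mono_left inf_le_left) ?_
    refine (tendsto_const_nhds : Filter.Tendsto (fun _ => (0:ℝ)) _ _).congr' ?_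
    exact Filter.eventually_inf_principal.mpr (Filter.Eventually.of_forall fun y hy => hy.symm)

/-- A continuous function on a preconnected set taking values in `{2nπ : n ∈ ℤ}` is constant. -/
lemma const_of_sin_half_eq_zero {E : Type*} [NormedAddCommGroup E] [NormedSpace ℝ E]
    {d : E → ℝ} {U : Set E} (hUconn : IsPreconnected U) (hd : ContinuousOn d U)
    (hz : ∀ x ∈ U, Real.sin (d x / 2) = 0) {x₀ : E} (hx₀ : x₀ ∈ U) :
    ∃ l : ℤ, ∀ x ∈ U, d x = 2 * l * Real.pi := by
  have hmem : ∀ x ∈ U, ∃ m : ℤ, d x = 2 * m * Real.pi := by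
    intro x hx
    obtain ⟨m, hm⟩ := Real.sin_eq_zero_iff.mp (hz x hx)
    exact ⟨m, by linarith⟩
  have himg : IsPreconnected (d '' U) := hUconn.image d hd
  have hsub : (d '' U).Subsingleton := by
    refine subsingleton_of_preconnected_countable himg
      (Set.countable_range fun m : ℤ => 2 * (m : ℝ) * Real.pi) ?_
    rintro _ ⟨x, hx, rfl⟩
    obtain ⟨m, hm⟩ := hmem x hx
    exact ⟨m, hm.symm⟩
  obtain ⟨l, hl⟩ := hmem x₀ hx₀
  refine ⟨l, fun x hx => ?_⟩
  have := hsub (Set.mem_image_of_mem d hx) (Set.mem_image_of_mem d hx₀)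
  rw [this, hl]

/-- If two real-valued functions θ₁, θ₂ are real-analytic on a nonempty
connected open set U ⊆ ℝⁿ and cos θ₁ = cos θ₂ on U, then either θ₁ = θ₂ + 2lπ on U or
θ₁ = -θ₂ + 2lπ on U for some integer l. -/
theorem stmt_0 {n : ℕ} (U : Set (Fin n → ℝ)) (hUopen : IsOpen U) (hUne : U.Nonempty)
    (hUconn : IsConnected U) (θ₁ θ₂ : (Fin n → ℝ) → ℝ)
    (h₁ : AnalyticOnNhd ℝ θ₁ U) (h₂ : AnalyticOnNhd ℝ θ₂ U)
    (hcos : ∀ x ∈ U, Real.cos (θ₁ x) = Real.cos (θ₂ x)) :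
    ∃ l : ℤ, (∀ x ∈ U, θ₁ x = θ₂ x + 2 * l * Real.pi) ∨
      (∀ x ∈ U, θ₁ x = -θ₂ x + 2 * l * Real.pi) := by
  obtain ⟨x₀, hx₀⟩ := hUne
  set A : (Fin n → ℝ) → ℝ := fun x => Real.sin ((θ₁ x - θ₂ x) / 2) with hA
  set B : (Fin n → ℝ) → ℝ := fun x => Real.sin ((θ₁ x + θ₂ x) / 2) with hB
  have hAan : AnalyticOnNhd ℝ A U := fun x hx =>
    (analyticAt_rsin _).comp (((h₁ x hx).sub (h₂ x hx)).div analyticAt_const two_ne_zero)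
  have hBan : AnalyticOnNhd ℝ B U := fun x hx =>
    (analyticAt_rsin _).comp (((h₁ x hx).add (h₂ x hx)).div analyticAt_const two_ne_zero)
  have hprod : ∀ x ∈ U, B x * A x = 0 := by
    intro x hx
    have h := hcos x hx
    have h2 := Real.cos_sub_cos (θ₁ x) (θ₂ x)
    rw [h, sub_self] at h2
    have : -2 * (B x * A x) = 0 := by rw [hA, hB]; ring_nf; ring_nf at h2; linarith
    linarith
  rcases analytic_mul_eq_zero hUopen hUconn.isPreconnected hBan hAan hprod with hB0 | hA0
  · -- sum case
    obtain ⟨l, hl⟩ := const_of_sin_half_eq_zero hUconn.isPreconnected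
      ((h₁.continuousOn).add (h₂.continuousOn)) (fun x hx => hB0 x hx) hx₀
    exact ⟨l, Or.inr fun x hx => by have := hl x hx; simp only [Pi.add_apply] at this; linarith⟩
  · -- difference case
    obtain ⟨l, hl⟩ := const_of_sin_half_eq_zero hUconn.isPreconnected
      ((h₁.continuousOn).sub (h₂.continuousOn)) (fun x hx => hA0 x hx) hx₀
    exact ⟨l, Or.inl fun x hx => by have := hl x hx; simp only [Pi.sub_apply] at this; linarith⟩
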